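/- Let X, Y be Hilbert spaces, A ∈ B(X,Y), T ⊆ X, S ⊆ Y closed subspaces such that G = A_{T,S}^{(2)} exists, and T' a closed subspace of X with δ̂(T,T') < 1/(1 + ‖A‖·‖G‖)². Then ‖A_{T',S}^{(2)} − A_{T,S}^{(2)}‖ ≤ ((1+√5)/2)·‖A_{T',S}^{(2)}‖·‖A_{T,S}^{(2)}‖·‖A‖·δ̂(T,T'). -/

import Mathlib

noncomputable section

open ContinuousLinearMap

/-- δ(M,N) = sup{dist(x,N) : x ∈ M, ‖x‖ = 1}, with sSup ∅ = 0 covering M = {0}. -/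
def gapDelta {H : Type*} [NormedAddCommGroup H] (M N : Set H) : ℝ :=
  sSup ((fun x => Metric.infDist x N) '' {x | x ∈ M ∧ ‖x‖ = 1})

/-- The gap δ̂(M,N) = max{δ(M,N), δ(N,M)}. -/
def gapHat {H : Type*} [NormedAddCommGroup H] (M N : Set H) : ℝ :=
  max (gapDelta M N) (gapDelta N M)

/-- Orthogonal projection onto a closed subspace, as an operator H →L[ℂ] H. -/
def projCLM {H : Type*} [NormedAddCommGroup H] [InnerProductSpace ℂ H] [CompleteSpace H]
    (K : Submodule ℂ H) (hK : IsClosed (K : Set H)) : H →L[ℂ] H :=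
  haveI := hK.completeSpace_coe
  K.subtypeL.comp K.orthogonalProjectionOnto

/-- G is the outer inverse A_{T,S}^{(2)}: GAG = G, R(G) = T, N(G) = S. -/
def IsOuterInv {X Y : Type*} [NormedAddCommGroup X] [NormedSpace ℂ X]
    [NormedAddCommGroup Y] [NormedSpace ℂ Y]
    (A : X →L[ℂ] Y) (T : Submodule ℂ X) (S : Submodule ℂ Y) (G : Y →L[ℂ] X) : Prop :=
  G ∘L (A ∘L G) = G ∧ LinearMap.range (G : Y →ₗ[ℂ] X) = T ∧ LinearMap.ker (G : Y →ₗ[ℂ] X) = S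

/-- B is the Moore–Penrose inverse of A. -/
def IsMPInv {X Y : Type*} [NormedAddCommGroup X] [InnerProductSpace ℂ X] [CompleteSpace X]
    [NormedAddCommGroup Y] [InnerProductSpace ℂ Y] [CompleteSpace Y]
    (A : X →L[ℂ] Y) (B : Y →L[ℂ] X) : Prop :=
  A ∘L (B ∘L A) = A ∧ B ∘L (A ∘L B) = B ∧
  adjoint (A ∘L B) = A ∘L B ∧ adjoint (B ∘L A) = B ∘L A

section AuxLemmas
open Metric
variable {H : Type*} [NormedAddCommGroup H] [InnerProductSpace ℂ H] [CompleteSpace H]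

lemma projCLM_mem (K : Submodule ℂ H) (hK : IsClosed (K : Set H)) (x : H) :
    projCLM K hK x ∈ K := by
  haveI := hK.completeSpace_coe
  exact SetLike.coe_mem (K.orthogonalProjectionOnto x)

lemma projCLM_eq_self (K : Submodule ℂ H) (hK : IsClosed (K : Set H)) {x : H} (hx : x ∈ K) :
    projCLM K hK x = x := by
  haveI := hK.completeSpace_coe
  have := Submodule.orthogonalProjectionOnto_mem_subspace_eq_self (K := K) ⟨x, hx⟩
  simpa [projCLM] using congrArg (Subtype.val) this

lemma sub_projCLM_mem (K : Submodule ℂ H) (hK : IsClosed (K : Set H)) (x : H) :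
    x - projCLM K hK x ∈ Kᗮ := by
  haveI := hK.completeSpace_coe
  exact K.sub_starProjection_mem_orthogonal x

lemma norm_projCLM_le (K : Submodule ℂ H) (hK : IsClosed (K : Set H)) (x : H) :
    ‖projCLM K hK x‖ ≤ ‖x‖ := by
  haveI := hK.completeSpace_coe
  calc ‖projCLM K hK x‖ = ‖K.orthogonalProjectionOnto x‖ := rfl
  _ ≤ ‖(K.orthogonalProjectionOnto : H →L[ℂ] K)‖ * ‖x‖ := le_opNorm _ _
  _ ≤ 1 * ‖x‖ := by gcongr; exact Submodule.orthogonalProjectionOnto_norm_le K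
  _ = ‖x‖ := one_mul _

omit [CompleteSpace H] in
lemma pythag {K : Submodule ℂ H} {b a : H} (hb : b ∈ K) (ha : a ∈ Kᗮ) :
    ‖b - a‖ ^ 2 = ‖b‖ ^ 2 + ‖a‖ ^ 2 := by
  have h : inner ℂ b a = (0 : ℂ) := Submodule.inner_right_of_mem_orthogonal hb ha
  rw [@norm_sub_sq ℂ, h]
  simp

omit [CompleteSpace H] in
lemma gapDelta_bddAbove (M : Set H) (N : Submodule ℂ H) :
    BddAbove ((fun x => Metric.infDist x (N : Set H)) '' {x | x ∈ M ∧ ‖x‖ = 1}) := by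
  refine ⟨1, ?_⟩
  rintro r ⟨x, ⟨hxM, hx1⟩, rfl⟩
  calc Metric.infDist x (N : Set H) ≤ dist x 0 := infDist_le_dist_of_mem N.zero_mem
  _ = ‖x‖ := by simp
  _ = 1 := hx1

omit [InnerProductSpace ℂ H] [CompleteSpace H] in
lemma gapDelta_nonneg (M N : Set H) : 0 ≤ gapDelta M N :=
  Real.sSup_nonneg (by rintro r ⟨x, _, rfl⟩; exact infDist_nonneg)

omit [InnerProductSpace ℂ H] [CompleteSpace H] in
lemma gapHat_nonneg (M N : Set H) : 0 ≤ gapHat M N :=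
  le_trans (gapDelta_nonneg M N) (le_max_left _ _)

/-- Key gap estimate: for `x ∈ M`, dist from x to its projection onto K is ≤ δ(M,K)‖x‖. -/
lemma gap_key (M K : Submodule ℂ H) (hK : IsClosed (K : Set H)) {x : H} (hx : x ∈ M) :
    ‖x - projCLM K hK x‖ ≤ gapDelta (M : Set H) (K : Set H) * ‖x‖ := by
  haveI := hK.completeSpace_coe
  rcases eq_or_ne x 0 with rfl | hx0
  · simp
  · have hnx : (0:ℝ) < ‖x‖ := norm_pos_iff.mpr hx0
    set c : ℂ := ((‖x‖⁻¹ : ℝ) : ℂ) with hc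
    set u : H := c • x with hu
    have huM : u ∈ M := M.smul_mem c hx
    have hun : ‖u‖ = 1 := by
      rw [hu, norm_smul, hc]
      simp [norm_inv, abs_of_pos hnx, inv_mul_cancel₀ hnx.ne']
    have hmin : ‖u - projCLM K hK u‖ ≤ Metric.infDist u (K : Set H) := by
      rw [infDist_eq_iInf]
      haveI : Nonempty K := ⟨⟨0, K.zero_mem⟩⟩
      refine le_ciInf fun y => ?_
      have h2 : ‖u - (y : H)‖ ^ 2 = ‖projCLM K hK u - (y : H)‖ ^ 2 + ‖u - projCLM K hK u‖ ^ 2 := by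
        have heq : u - (y : H) = (projCLM K hK u - (y : H)) - -(u - projCLM K hK u) := by abel
        rw [heq, pythag (K.sub_mem (projCLM_mem K hK u) y.2) (Kᗮ.neg_mem (sub_projCLM_mem K hK u)), norm_neg]
      have hd : dist u (y : H) = ‖u - (y : H)‖ := dist_eq_norm _ _
      rw [hd]
      nlinarith [norm_nonneg (u - projCLM K hK u), norm_nonneg (u - (y : H)),
        sq_nonneg ‖projCLM K hK u - (y : H)‖]
    have hsup : Metric.infDist u (K : Set H) ≤ gapDelta (M : Set H) (K : Set H) :=
      le_csSup (gapDelta_bddAbove (M : Set H) K) ⟨u, ⟨huM, hun⟩, rfl⟩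
    have hxu : x = (‖x‖ : ℂ) • u := by
      rw [hu, smul_smul, hc]
      norm_cast
      rw [mul_inv_cancel₀ hnx.ne']
      simp
    have hsc : x - projCLM K hK x = (‖x‖ : ℂ) • (u - projCLM K hK u) := by
      conv_lhs => rw [hxu]
      rw [map_smul, smul_sub]
    calc ‖x - projCLM K hK x‖ = ‖x‖ * ‖u - projCLM K hK u‖ := by
          rw [hsc, norm_smul]; norm_num
    _ ≤ ‖x‖ * gapDelta (M : Set H) (K : Set H) := by
          exact mul_le_mul_of_nonneg_left (le_trans hmin hsup) (norm_nonneg x)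
    _ = gapDelta (M : Set H) (K : Set H) * ‖x‖ := mul_comm _ _

lemma one_le_gapDelta_bot {M : Submodule ℂ H} (hM : M ≠ ⊥) :
    1 ≤ gapDelta (M : Set H) ((⊥ : Submodule ℂ H) : Set H) := by
  obtain ⟨x, hxM, hx0⟩ := Submodule.exists_mem_ne_zero_of_ne_bot hM
  have hnx : (0:ℝ) < ‖x‖ := norm_pos_iff.mpr hx0
  set u : H := ((‖x‖⁻¹ : ℝ) : ℂ) • x with hu
  have huM : u ∈ M := M.smul_mem _ hxM
  have hun : ‖u‖ = 1 := by
    rw [hu, norm_smul]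
    simp [abs_of_pos hnx, inv_mul_cancel₀ hnx.ne']
  have : Metric.infDist u (((⊥ : Submodule ℂ H) : Set H)) = 1 := by
    rw [Submodule.bot_coe, infDist_singleton]
    simpa using hun
  rw [← this]
  exact le_csSup (gapDelta_bddAbove (M : Set H) ⊥) ⟨u, ⟨huM, hun⟩, rfl⟩

end AuxLemmas

variable {X Y : Type*} [NormedAddCommGroup X] [InnerProductSpace ℂ X] [CompleteSpace X]
  [NormedAddCommGroup Y] [InnerProductSpace ℂ Y] [CompleteSpace Y]
set_option maxHeartbeats 2000000 in
theorem stmt_10 (A : X →L[ℂ] Y) (T T' : Submodule ℂ X) (S : Submodule ℂ Y)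
    (hT : IsClosed (T : Set X)) (hT' : IsClosed (T' : Set X)) (hS : IsClosed (S : Set Y))
    (G : Y →L[ℂ] X) (hG : IsOuterInv A T S G)
    (hgap : gapHat (T : Set X) (T' : Set X) < 1 / (1 + ‖A‖ * ‖G‖) ^ 2) :
    ∃ G' : Y →L[ℂ] X, IsOuterInv A T' S G' ∧
      ‖G' - G‖ ≤ (1 + Real.sqrt 5) / 2 * ‖G'‖ * ‖G‖ * ‖A‖ * gapHat (T : Set X) (T' : Set X) := by
  obtain ⟨hGAG, hran, hker⟩ := hG
  set δ := gapHat (T : Set X) (T' : Set X) with hδdef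
  have hδ0 : 0 ≤ δ := gapHat_nonneg _ _
  have ht0 : (0:ℝ) ≤ ‖A‖ * ‖G‖ := by positivity
  have hδlt : δ * (1 + ‖A‖ * ‖G‖) ^ 2 < 1 := by
    have h2 : (0:ℝ) < (1 + ‖A‖ * ‖G‖) ^ 2 := by positivity
    rw [← lt_div_iff₀ h2]
    simpa using hgap
  have hδ1 : δ < 1 := by nlinarith
  by_cases hT'bot : T' = ⊥
  · -- degenerate case : T' = ⊥ forces T = ⊥, G = 0
    have hTbot : T = ⊥ := by
      by_contra hTb
      have h1 : (1:ℝ) ≤ gapDelta (T : Set X) (T' : Set X) := by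
        rw [hT'bot]; exact one_le_gapDelta_bot hTb
      have h2 : (1:ℝ) ≤ δ := le_trans h1 (le_max_left _ _)
      linarith
    have hG0 : G = 0 := by
      ext y
      have hy : G y ∈ (⊥ : Submodule ℂ X) := by
        rw [← hTbot, ← hran]; exact LinearMap.mem_range_self (G : Y →ₗ[ℂ] X) y
      simpa using hy
    refine ⟨0, ⟨by simp, ?_, ?_⟩, ?_⟩
    · rw [hT'bot]
      refine le_antisymm ?_ bot_le
      rintro x ⟨y, rfl⟩
      simp
    · rw [← hker, hG0]
    · simp [hG0]
  · -- main case
    set P : X →L[ℂ] X := projCLM T hT with hP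
    set P' : X →L[ℂ] X := projCLM T' hT' with hP'
    have hGmem : ∀ y, G y ∈ T := fun y => by
      rw [← hran]; exact LinearMap.mem_range_self (G : Y →ₗ[ℂ] X) y
    have hGAGy : ∀ y, G (A (G y)) = G y := fun y => by
      have := DFunLike.congr_fun hGAG y
      simpa using this
    have hGAx : ∀ x ∈ T, G (A x) = x := by
      intro x hx
      rw [← hran] at hx
      obtain ⟨y, rfl⟩ := hx
      exact hGAGy y
    have hgapT : ∀ x ∈ T, ‖x - P' x‖ ≤ δ * ‖x‖ := fun x hx =>
      le_trans (gap_key T T' hT' hx)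
        (mul_le_mul_of_nonneg_right (le_max_left _ _) (norm_nonneg x))
    have hgapT' : ∀ x ∈ T', ‖x - P x‖ ≤ δ * ‖x‖ := fun x hx =>
      le_trans (gap_key T' T hT hx)
        (mul_le_mul_of_nonneg_right (le_max_right _ _) (norm_nonneg x))
    set N : X →L[ℂ] X := P' ∘L ((1 - G ∘L A) ∘L ((1 - P) ∘L P')) with hN
    have hNapply : ∀ x, N x =
        P' ((P' x - P (P' x)) - G (A (P' x - P (P' x)))) := fun x => by
      rw [hN]; simp; abel
    have hNnorm : ‖N‖ < 1 := by
      have hb : ‖N‖ ≤ (1 + ‖A‖ * ‖G‖) * δ := by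
        refine opNorm_le_bound _ (by positivity) fun x => ?_
        rw [hNapply]
        have hw : ‖P' x - P (P' x)‖ ≤ δ * ‖x‖ := by
          calc ‖P' x - P (P' x)‖ ≤ δ * ‖P' x‖ := hgapT' _ (projCLM_mem T' hT' x)
          _ ≤ δ * ‖x‖ := mul_le_mul_of_nonneg_left (norm_projCLM_le T' hT' x) hδ0
        set w := P' x - P (P' x) with hwdef
        calc ‖P' (w - G (A w))‖ ≤ ‖w - G (A w)‖ := norm_projCLM_le T' hT' _
        _ ≤ ‖w‖ + ‖G (A w)‖ := norm_sub_le _ _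
        _ ≤ ‖w‖ + ‖A‖ * ‖G‖ * ‖w‖ := by
            have h1 : ‖G (A w)‖ ≤ ‖G‖ * ‖A w‖ := le_opNorm _ _
            have h2 : ‖A w‖ ≤ ‖A‖ * ‖w‖ := le_opNorm _ _
            nlinarith [norm_nonneg (A w), opNorm_nonneg G, opNorm_nonneg A, norm_nonneg w]
        _ = (1 + ‖A‖ * ‖G‖) * ‖w‖ := by ring
        _ ≤ (1 + ‖A‖ * ‖G‖) * (δ * ‖x‖) := by
            exact mul_le_mul_of_nonneg_left hw (by linarith)
        _ = (1 + ‖A‖ * ‖G‖) * δ * ‖x‖ := by ring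
      have hlt : (1 + ‖A‖ * ‖G‖) * δ < 1 := by nlinarith
      exact lt_of_le_of_lt hb hlt
    set u : (X →L[ℂ] X)ˣ := Units.oneSub N hNnorm with hu
    have huval : (↑u : X →L[ℂ] X) = 1 - N := rfl
    set G' : Y →L[ℂ] X := (↑u⁻¹ : X →L[ℂ] X) ∘L (P' ∘L G) with hG'
    have hG'apply : ∀ y, G' y = (↑u⁻¹ : X →L[ℂ] X) (P' (G y)) := fun y => rfl
    have hinv_apply : ∀ w, (↑u⁻¹ : X →L[ℂ] X) ((↑u : X →L[ℂ] X) w) = w := fun w => by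
      rw [← ContinuousLinearMap.mul_apply, u.inv_mul, ContinuousLinearMap.one_apply]
    have hu_inv_apply : ∀ w, (↑u : X →L[ℂ] X) ((↑u⁻¹ : X →L[ℂ] X) w) = w := fun w => by
      rw [← ContinuousLinearMap.mul_apply, u.mul_inv, ContinuousLinearMap.one_apply]
    have hP'idem : ∀ x, P' (P' x) = P' x := fun x =>
      projCLM_eq_self T' hT' (projCLM_mem T' hT' x)
    -- key : u x = P' (G (A x)) for x ∈ T'
    have hkey : ∀ x ∈ T', (↑u : X →L[ℂ] X) x = P' (G (A x)) := by
      intro x hx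
      have hP'x : P' x = x := projCLM_eq_self T' hT' hx
      have hGAP : G (A (P x)) = P x := hGAx _ (projCLM_mem T hT x)
      have hNx : N x = x - P' (G (A x)) := by
        rw [hNapply, hP'x]
        have : x - P x - G (A (x - P x)) = x - G (A x) := by
          rw [map_sub A, map_sub G, hGAP]; abel
        rw [this, map_sub, hP'x]
      rw [huval]
      simp [hNx]
    have hii : ∀ x ∈ T', G' (A x) = x := by
      intro x hx
      rw [hG'apply, ← hkey x hx, hinv_apply]
    -- commutation of P' with u⁻¹
    have hPu : P' * (↑u : X →L[ℂ] X) = (↑u : X →L[ℂ] X) * P' := by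
      have hNP' : ∀ x, N (P' x) = N x := fun x => by
        rw [hNapply, hNapply, hP'idem]
      have hP'N : ∀ x, P' (N x) = N x := fun x => by
        conv_lhs => rw [hNapply]
        rw [hP'idem, ← hNapply]
      ext x
      simp only [ContinuousLinearMap.mul_apply, huval, ContinuousLinearMap.sub_apply,
        ContinuousLinearMap.one_apply, map_sub, hNP' x, hP'N x]
    have hPuinv : P' * (↑u⁻¹ : X →L[ℂ] X) = (↑u⁻¹ : X →L[ℂ] X) * P' := by
      have h := congrArg (fun z => (↑u⁻¹ : X →L[ℂ] X) * z * (↑u⁻¹ : X →L[ℂ] X)) hPu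
      simp only [mul_assoc, Units.mul_inv_cancel_left, Units.inv_mul_cancel_left,
        Units.mul_inv, Units.inv_mul, mul_one, one_mul] at h
      exact h.symm
    have hrangesub : ∀ y, G' y ∈ T' := fun y => by
      have h := DFunLike.congr_fun hPuinv (G y)
      simp only [ContinuousLinearMap.mul_apply] at h
      rw [hG'apply, ← h]
      exact projCLM_mem T' hT' _
    -- kernel
    have hkerG' : LinearMap.ker (G' : Y →ₗ[ℂ] X) = S := by
      ext y
      simp only [LinearMap.mem_ker, ContinuousLinearMap.coe_coe]
      constructor
      · intro h
        rw [hG'apply] at h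
        have h0 : P' (G y) = 0 := by
          have := congrArg (↑u : X →L[ℂ] X) h
          rw [hu_inv_apply] at this
          simpa using this
        have hb : ‖G y‖ ≤ δ * ‖G y‖ := by
          have := hgapT (G y) (hGmem y)
          rwa [show G y - P' (G y) = G y by rw [h0, sub_zero]] at this
        have hGy0 : G y = 0 := by
          by_contra hne
          have : (0:ℝ) < ‖G y‖ := norm_pos_iff.mpr hne
          nlinarith
        rw [← hker]
        exact hGy0
      · intro h
        have hGy : G y = 0 := by rw [← hker] at h; exact h
        rw [hG'apply, hGy]
        simp
    -- range
    have hranG' : LinearMap.range (G' : Y →ₗ[ℂ] X) = T' := by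
      refine le_antisymm ?_ ?_
      · rintro x ⟨y, rfl⟩
        exact hrangesub y
      · intro x hx
        exact ⟨A x, hii x hx⟩
    have houter : G' ∘L (A ∘L G') = G' := by
      ext y
      simp only [ContinuousLinearMap.comp_apply]
      exact hii (G' y) (hrangesub y)
    refine ⟨G', ⟨houter, hranG', hkerG'⟩, ?_⟩
    -- norm estimate
    have hG'AG : ∀ y, G' (A (G y)) = G' y := fun y => by
      rw [hG'apply, hG'apply, hGAGy]
    have hdecomp : ∀ y, G' y - G y = G' (A (G y - P' (G y))) - (G y - P' (G y)) := by
      intro y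
      have h1 : G' (A (G y - P' (G y))) = G' (A (G y)) - G' (A (P' (G y))) := by
        rw [map_sub A, map_sub G']
      rw [h1, hG'AG y, hii (P' (G y)) (projCLM_mem T' hT' _)]
      abel
    obtain ⟨x0, hx0T', hx00⟩ := Submodule.exists_mem_ne_zero_of_ne_bot hT'bot
    have hc1 : (1:ℝ) ≤ ‖G'‖ * ‖A‖ := by
      have hxpos : (0:ℝ) < ‖x0‖ := norm_pos_iff.mpr hx00
      have h1 : ‖x0‖ ≤ ‖G'‖ * ‖A‖ * ‖x0‖ := by
        calc ‖x0‖ = ‖G' (A x0)‖ := by rw [hii x0 hx0T']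
        _ ≤ ‖G'‖ * ‖A x0‖ := le_opNorm _ _
        _ ≤ ‖G'‖ * (‖A‖ * ‖x0‖) := by
            exact mul_le_mul_of_nonneg_left (le_opNorm A x0) (opNorm_nonneg _)
        _ = ‖G'‖ * ‖A‖ * ‖x0‖ := by ring
      nlinarith
    have h5 : Real.sqrt 5 ^ 2 = 5 := Real.sq_sqrt (by norm_num)
    have h5n : (0:ℝ) ≤ Real.sqrt 5 := Real.sqrt_nonneg 5
    set φ : ℝ := (1 + Real.sqrt 5) / 2 with hφdef
    have hφsq : φ ^ 2 = φ + 1 := by rw [hφdef]; nlinarith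
    have hφ1 : (1:ℝ) ≤ φ := by rw [hφdef]; nlinarith
    have hM0 : (0:ℝ) ≤ φ * ‖G'‖ * ‖G‖ * ‖A‖ * δ := by
      have : (0:ℝ) ≤ φ := by linarith
      positivity
    refine opNorm_le_bound _ hM0 fun y => ?_
    set z : X := G y - P' (G y) with hz
    have hzT' : z ∈ T'ᗮ := sub_projCLM_mem T' hT' (G y)
    set s : ℝ := δ * (‖G‖ * ‖y‖) with hs
    have hs0 : (0:ℝ) ≤ s := by positivity
    have hbz : ‖z‖ ≤ s := by
      calc ‖z‖ ≤ δ * ‖G y‖ := hgapT _ (hGmem y)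
      _ ≤ δ * (‖G‖ * ‖y‖) := mul_le_mul_of_nonneg_left (le_opNorm _ _) hδ0
    set c : ℝ := ‖G'‖ * ‖A‖ with hc
    have hbu : ‖G' (A z)‖ ≤ c * s := by
      calc ‖G' (A z)‖ ≤ ‖G'‖ * ‖A z‖ := le_opNorm _ _
      _ ≤ ‖G'‖ * (‖A‖ * ‖z‖) := mul_le_mul_of_nonneg_left (le_opNorm _ _) (opNorm_nonneg _)
      _ = c * ‖z‖ := by rw [hc]; ring
      _ ≤ c * s := mul_le_mul_of_nonneg_left hbz (by nlinarith)
    have hpy : ‖G' (A z) - z‖ ^ 2 = ‖G' (A z)‖ ^ 2 + ‖z‖ ^ 2 :=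
      pythag (hrangesub (A z)) hzT'
    have hsq : ‖G' (A z) - z‖ ^ 2 ≤ (φ * ‖G'‖ * ‖G‖ * ‖A‖ * δ * ‖y‖) ^ 2 := by
      have heq : (φ * ‖G'‖ * ‖G‖ * ‖A‖ * δ * ‖y‖) ^ 2 = φ ^ 2 * c ^ 2 * s ^ 2 := by
        rw [hc, hs]; ring
      rw [hpy, heq, hφsq]
      have h1 : ‖G' (A z)‖ ^ 2 ≤ (c * s) ^ 2 :=
        pow_le_pow_left₀ (norm_nonneg _) hbu 2
      have h2 : ‖z‖ ^ 2 ≤ s ^ 2 := pow_le_pow_left₀ (norm_nonneg _) hbz 2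
      have hcc : (1:ℝ) ≤ c ^ 2 := by nlinarith
      nlinarith [sq_nonneg s]
    have hfin : ‖G' (A z) - z‖ ≤ φ * ‖G'‖ * ‖G‖ * ‖A‖ * δ * ‖y‖ :=
      le_of_pow_le_pow_left₀ (by norm_num) (by positivity) hsq
    calc ‖(G' - G) y‖ = ‖G' (A z) - z‖ := by
          rw [ContinuousLinearMap.sub_apply, hdecomp y, hz]
    _ ≤ φ * ‖G'‖ * ‖G‖ * ‖A‖ * δ * ‖y‖ := hfin
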